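/- Monotonicity of relative bisimilarity: Let Γ = (C, A, Δ) be a normed BPA system and R1 ⊆ R2 ⊆ C_G. Then for all processes α, β: if α ≃_{R1} β then α ≃_{R2} β. -/

import Mathlib

open Relation

/-- A BPA system over constants `C` and actions `A`: a distinguished silent
action `tau`, and a finite set of transition rules `X —ℓ→ α`, where `C` and
`A` are finite. -/
structure BPA (C A : Type) where
  tau : A
  rules : Set (C × A × List C)
  finC : Finite C
  finA : Finite A
  finRules : rules.Finite

namespace BPA

variable {C A : Type}

/-- One-step labelled transition between processes.  Processes are strings
over `C` (lists, with the leftmost constant acting first). -/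
def Step (Γ : BPA C A) (ℓ : A) (p q : List C) : Prop :=
  ∃ X γ β, (X, ℓ, γ) ∈ Γ.rules ∧ p = X :: β ∧ q = γ ++ β

/-- A transition carrying an arbitrary label. -/
def AnyStep (Γ : BPA C A) (p q : List C) : Prop := ∃ ℓ, Γ.Step ℓ p q

/-- `⟹` : the reflexive transitive closure of silent steps. -/
def TauStar (Γ : BPA C A) : List C → List C → Prop := ReflTransGen (Γ.Step Γ.tau)

/-- A process is normed if it can reach the empty process `ε`. -/
def NormedProc (Γ : BPA C A) (p : List C) : Prop := ReflTransGen Γ.AnyStep p []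

/-- The BPA system is normed. -/
def Normed (Γ : BPA C A) : Prop := ∀ X : C, Γ.NormedProc [X]

/-- A chain of `s`-steps starting at `start` in which every visited state is
related by `r` to the process `anchor`. -/
def RelChain (s : List C → List C → Prop) (r : List C → List C → Prop)
    (anchor : List C) : List C → List C → Prop :=
  ReflTransGen fun x y => s x y ∧ r anchor y

/-- Branching bisimulation (an equivalence relation by convention). -/
def IsBranchingBisim (Γ : BPA C A) (r : List C → List C → Prop) : Prop :=
  Equivalence r ∧ ∀ α β, r α β →
    ((∀ a, a ≠ Γ.tau → ∀ α', Γ.Step a α α' →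
        ∃ β'' β', RelChain (Γ.Step Γ.tau) r β β β'' ∧ Γ.Step a β'' β' ∧ r α' β') ∧
     (∀ α', Γ.Step Γ.tau α α' → ¬ r α α' →
        ∃ β'' β', RelChain (Γ.Step Γ.tau) r β β β'' ∧ Γ.Step Γ.tau β'' β' ∧
          ¬ r β'' β' ∧ r α' β'))

/-- Branching bisimilarity `≃` : the largest branching bisimulation. -/
def Bisim (Γ : BPA C A) (α β : List C) : Prop :=
  ∃ r, Γ.IsBranchingBisim r ∧ r α β

/-- A ground process: it can silently reach `ε`. -/
def Ground (Γ : BPA C A) (p : List C) : Prop := Γ.TauStar p []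

/-- The set `C_G` of ground constants. -/
def GroundC (Γ : BPA C A) : Set C := {X | Γ.Ground [X]}

/-- `R`-equality `=_R`: the two processes differ only in suffixes over `R`. -/
def REq (R : Set C) (α β : List C) : Prop :=
  ∃ ζ a b, α = ζ ++ a ∧ β = ζ ++ b ∧ (∀ X ∈ a, X ∈ R) ∧ (∀ X ∈ b, X ∈ R)

open Classical in
/-- The `R`-normal form `α_R` of a process: delete the maximal suffix over `R`. -/
noncomputable def nf (R : Set C) (α : List C) : List C :=
  (α.reverse.dropWhile fun X => decide (X ∈ R)).reverse

/-- A process is in `R`-normal form. -/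
def InNF (R : Set C) (α : List C) : Prop := nf R α = α

/-- The `R`-transition relation `—ℓ→_R` between `R`-normal forms. -/
def StepR (Γ : BPA C A) (R : Set C) (ℓ : A) (ζ η : List C) : Prop :=
  ∃ α β, ζ = nf R α ∧ η = nf R β ∧ Γ.Step ℓ α β

/-- `⟹_R`. -/
def TauStarR (Γ : BPA C A) (R : Set C) : List C → List C → Prop :=
  ReflTransGen (Γ.StepR R Γ.tau)

/-- `R`-bisimulation: an equivalence relation containing `=_R` satisfying
ground preservation and the relativized branching transfer conditions. -/
def IsRBisim (Γ : BPA C A) (R : Set C) (r : List C → List C → Prop) : Prop :=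
  Equivalence r ∧ (∀ α β, REq R α β → r α β) ∧
  ∀ α β, r α β →
    ((Γ.TauStar α [] → Γ.TauStar β []) ∧
     (∀ α', Γ.Step Γ.tau α α' → ¬ r α α' →
        ∃ β'' β', RelChain (Γ.StepR R Γ.tau) r β (nf R β) β'' ∧
          Γ.StepR R Γ.tau β'' β' ∧ ¬ r β'' β' ∧ r α' β') ∧
     (∀ a, a ≠ Γ.tau → ∀ α', Γ.Step a α α' →
        ∃ β'' β', RelChain (Γ.StepR R Γ.tau) r β (nf R β) β'' ∧
          Γ.StepR R a β'' β' ∧ r α' β'))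

/-- `R`-bisimilarity `≃_R` : the largest `R`-bisimulation. -/
def RBisim (Γ : BPA C A) (R : Set C) (α β : List C) : Prop :=
  ∃ r, Γ.IsRBisim R r ∧ r α β

/-- `Id_R = {X ∈ C : X ≃_R ε}`. -/
def IdR (Γ : BPA C A) (R : Set C) : Set C := {X | Γ.RBisim R [X] []}

/-- `Rd_R(γ) = {X ∈ C : Xγ ≃_R γ}`. -/
def RdR (Γ : BPA C A) (R : Set C) (γ : List C) : Set C :=
  {X | Γ.RBisim R (X :: γ) γ}

/-- An admissible reference set: `R = Id_R`. -/
def Admissible (Γ : BPA C A) (R : Set C) : Prop := R = Γ.IdR R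

end BPA
section ListAux

variable {C : Type}

theorem dropWhile_append_of_forall {p : C → Bool} :
    ∀ {l₁ l₂ : List C}, (∀ x ∈ l₁, p x = true) →
      (l₁ ++ l₂).dropWhile p = l₂.dropWhile p := by
  intro l₁
  induction l₁ with
  | nil => intro l₂ _; rfl
  | cons a t ih =>
    intro l₂ h
    have ha : p a = true := h a List.mem_cons_self
    simp [List.dropWhile_cons, ha, ih (fun x hx => h x (List.mem_cons_of_mem a hx))]

theorem dropWhile_idem {p : C → Bool} : ∀ {l : List C},
    (l.dropWhile p).dropWhile p = l.dropWhile p := by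
  intro l
  induction l with
  | nil => rfl
  | cons a t ih =>
    by_cases ha : p a = true
    · simp [List.dropWhile_cons, ha, ih]
    · have ha' : p a = false := by simpa using ha
      simp [List.dropWhile_cons, ha']

end ListAux

namespace BPA

variable {C A : Type}

/-- Decomposition: `α = (nf R α) ++ s` with `s` over `R`. -/
theorem nf_decomp (R : Set C) (α : List C) :
    ∃ s, α = nf R α ++ s ∧ ∀ X ∈ s, X ∈ R := by
  classical
  unfold nf
  refine ⟨(α.reverse.takeWhile fun X => decide (X ∈ R)).reverse, ?_, ?_⟩
  · conv_lhs => rw [← α.reverse_reverse, ← List.takeWhile_append_dropWhile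
      (p := fun X => decide (X ∈ R)) (l := α.reverse)]
    rw [List.reverse_append]
  · intro X hX
    rw [List.mem_reverse] at hX
    have := List.mem_takeWhile_imp hX
    simpa using this

theorem nf_append (R : Set C) (α s : List C) (hs : ∀ X ∈ s, X ∈ R) :
    nf R (α ++ s) = nf R α := by
  unfold nf
  rw [List.reverse_append, dropWhile_append_of_forall]
  intro x hx
  rw [List.mem_reverse] at hx
  simpa using hs x hx

theorem nf_nil (R : Set C) : nf R ([] : List C) = [] := rfl

theorem nf_idem (R : Set C) (α : List C) : nf R (nf R α) = nf R α := by
  unfold nf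
  rw [List.reverse_reverse, dropWhile_idem]

theorem nf_nf {R₁ R₂ : Set C} (h12 : R₁ ⊆ R₂) (α : List C) :
    nf R₂ (nf R₁ α) = nf R₂ α := by
  obtain ⟨s, hdec, hs⟩ := nf_decomp R₁ α
  conv_rhs => rw [hdec]
  rw [nf_append R₂ _ s (fun X hX => h12 (hs X hX))]

theorem nf_eq_nil (R : Set C) (s : List C) (hs : ∀ X ∈ s, X ∈ R) :
    nf R s = [] := by
  have := nf_append R [] s hs
  simpa [nf_nil] using this

variable (Γ : BPA C A)

theorem Step.append {ℓ : A} {p q : List C} (h : Γ.Step ℓ p q) (c : List C) :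
    Γ.Step ℓ (p ++ c) (q ++ c) := by
  obtain ⟨X, γ, β, hrule, rfl, rfl⟩ := h
  exact ⟨X, γ, β ++ c, hrule, rfl, by simp⟩

theorem stepR_of_step {R : Set C} {ℓ : A} {p q : List C} (h : Γ.Step ℓ p q) :
    Γ.StepR R ℓ (nf R p) (nf R q) := ⟨p, q, rfl, rfl, h⟩

theorem StepR.nf_left {R : Set C} {ℓ : A} {u u' : List C} (h : Γ.StepR R ℓ u u') :
    nf R u = u := by
  obtain ⟨p, q, rfl, rfl, _⟩ := h
  exact nf_idem R p

theorem StepR.nf_right {R : Set C} {ℓ : A} {u u' : List C} (h : Γ.StepR R ℓ u u') :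
    nf R u' = u' := by
  obtain ⟨p, q, rfl, rfl, _⟩ := h
  exact nf_idem R q

/-- Mirroring a representative's move from another member of the same class. -/
theorem mirror_step {R : Set C} {ℓ : A} {m n x : List C}
    (hstep : Γ.Step ℓ m n) (hne : nf R m ≠ []) (hx : nf R x = nf R m) :
    ∃ x₂, Γ.Step ℓ x x₂ ∧ nf R x₂ = nf R n := by
  obtain ⟨X, γ, βm, hrule, hm, hn⟩ := hstep
  obtain ⟨sm, hmdec, hsm⟩ := nf_decomp R m
  obtain ⟨sx, hxdec, hsx⟩ := nf_decomp R x
  rw [hx] at hxdec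
  obtain ⟨Y, ut, hu⟩ : ∃ Y ut, nf R m = Y :: ut := by
    cases hcase : nf R m with
    | nil => exact absurd hcase hne
    | cons Y ut => exact ⟨Y, ut, rfl⟩
  rw [hu] at hmdec hxdec
  rw [hm] at hmdec
  have hXY : X = Y ∧ βm = ut ++ sm := by
    constructor
    · exact (List.cons.injEq _ _ _ _ ▸ hmdec).1
    · exact (List.cons.injEq _ _ _ _ ▸ hmdec).2
  refine ⟨γ ++ (ut ++ sx), ⟨X, γ, ut ++ sx, hrule, by simp [hxdec, hXY.1], rfl⟩, ?_⟩
  rw [hn, hXY.2, ← List.append_assoc, ← List.append_assoc,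
    nf_append R (γ ++ ut) sx hsx, nf_append R (γ ++ ut) sm hsm]

/-- Image of a real τ-path in the `R`-quotient. -/
theorem quotient_path {R : Set C} {α β : List C} (h : Γ.TauStar α β) :
    Relation.ReflTransGen (Γ.StepR R Γ.tau) (nf R α) (nf R β) := by
  induction h with
  | refl => exact Relation.ReflTransGen.refl
  | tail _ hstep ih => exact ih.tail (Γ.stepR_of_step hstep)

theorem tauStar_append {p q : List C} (h : Γ.TauStar p q) (c : List C) :
    Γ.TauStar (p ++ c) (q ++ c) := by
  induction h with
  | refl => exact Relation.ReflTransGen.refl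
  | tail _ hstep ih => exact ih.tail (hstep.append Γ c)

/-- Strings over ground constants are ground. -/
theorem ground_of_forall {R : Set C} (h2 : R ⊆ Γ.GroundC) :
    ∀ (s : List C), (∀ X ∈ s, X ∈ R) → Γ.TauStar s [] := by
  intro s
  induction s with
  | nil => intro _; exact Relation.ReflTransGen.refl
  | cons X t ih =>
    intro hs
    have h1 : Γ.TauStar [X] [] := h2 (hs X List.mem_cons_self)
    have h1' : Γ.TauStar (X :: t) t := by
      have := Γ.tauStar_append h1 t
      simpa using this
    exact h1'.trans (ih fun Y hY => hs Y (List.mem_cons_of_mem X hY))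

/-- From a quotient τ-path to `[]`, real groundness of all representatives. -/
theorem ground_of_quotient_path {R : Set C} (h2 : R ⊆ Γ.GroundC) :
    ∀ {u w : List C}, Relation.ReflTransGen (Γ.StepR R Γ.tau) u w → w = [] →
      ∀ s, (∀ X ∈ s, X ∈ R) → Γ.TauStar (u ++ s) [] := by
  intro u w hpath
  induction hpath using Relation.ReflTransGen.head_induction_on with
  | refl =>
    intro hw s hs
    subst hw
    exact Γ.ground_of_forall h2 s hs
  | @head u u₁ hstep _ ih =>
    intro hw s hs
    by_cases hu : u = []
    · subst hu
      exact Γ.ground_of_forall h2 s hs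
    · obtain ⟨p, q, hpu, hqu, hpq⟩ := hstep
      have hnep : nf R p ≠ [] := by rw [← hpu]; exact hu
      have hxp : nf R (u ++ s) = nf R p := by
        rw [nf_append R u s hs, hpu, nf_idem]
      obtain ⟨x₂, hx₂step, hx₂⟩ := Γ.mirror_step hpq hnep hxp
      obtain ⟨s₂, hx₂dec, hs₂⟩ := nf_decomp R x₂
      have hnx : nf R x₂ = u₁ := by rw [hx₂, ← hqu]
      have hx₂g : Γ.TauStar x₂ [] := by
        rw [hx₂dec, hnx]
        exact ih hw s₂ hs₂
      exact Relation.ReflTransGen.head hx₂step hx₂g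
end BPA


namespace SemiBr

variable {S L : Type} (T : L → S → S → Prop) (tl : L)

/-- Semi-branching bisimulation clause for a relation. -/
def SemiB (R : S → S → Prop) : Prop :=
  ∀ u v, R u v → ∀ ℓ u', T ℓ u u' →
    ∃ vh v', ReflTransGen (T tl) v vh ∧ ((ℓ = tl ∧ v' = vh) ∨ T ℓ vh v') ∧
      R u vh ∧ R u' v'

/-- Semi-branching bisimilarity. -/
def BB (u v : S) : Prop :=
  ∃ R, SemiB T tl R ∧ SemiB T tl (flip R) ∧ R u v

variable {T tl}

theorem SemiB.of_iff {R R' : S → S → Prop} (h : ∀ u v, R u v ↔ R' u v)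
    (h' : SemiB T tl R') : SemiB T tl R := by
  intro u v huv ℓ u' hstep
  obtain ⟨vh, v', h1, h2, h3, h4⟩ := h' u v ((h u v).1 huv) ℓ u' hstep
  exact ⟨vh, v', h1, h2, (h u vh).2 h3, (h u' v').2 h4⟩

theorem semiB_eq : SemiB T tl (Eq : S → S → Prop) := by
  intro u v huv ℓ u' hstep
  subst huv
  exact ⟨u, u', ReflTransGen.refl, Or.inr hstep, rfl, rfl⟩

theorem BB.refl (u : S) : BB T tl u u :=
  ⟨Eq, semiB_eq, SemiB.of_iff (fun a b => eq_comm) semiB_eq, rfl⟩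

theorem BB.symm {u v : S} (h : BB T tl u v) : BB T tl v u := by
  obtain ⟨R, h1, h2, h3⟩ := h
  exact ⟨flip R, h2, SemiB.of_iff (fun a b => Iff.rfl) h1, h3⟩

/-- Weak push: a τ-path on the left can be simulated on the right. -/
theorem SemiB.push {R : S → S → Prop} (hR : SemiB T tl R) :
    ∀ {y yh : S}, ReflTransGen (T tl) y yh → ∀ {v : S}, R y v →
      ∃ vb, ReflTransGen (T tl) v vb ∧ R yh vb := by
  intro y yh hpath
  induction hpath using ReflTransGen.head_induction_on with
  | refl => exact fun hv => ⟨_, ReflTransGen.refl, hv⟩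
  | head hstep _ ih =>
    intro v hv
    obtain ⟨vh, v', h1, h2, _, h4⟩ := hR _ _ hv _ _ hstep
    rcases h2 with ⟨_, rfl⟩ | h2
    · obtain ⟨vb, hb1, hb2⟩ := ih h4
      exact ⟨vb, h1.trans hb1, hb2⟩
    · obtain ⟨vb, hb1, hb2⟩ := ih h4
      exact ⟨vb, (h1.trans (ReflTransGen.single h2)).trans hb1, hb2⟩

/-- Composition of semi-branching bisimulations. -/
theorem SemiB.comp {R R' : S → S → Prop} (hR : SemiB T tl R) (hR' : SemiB T tl R') :
    SemiB T tl (fun u w => ∃ y, R u y ∧ R' y w) := by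
  rintro u v ⟨y, huy, hyv⟩ ℓ u' hstep
  obtain ⟨yh, y', h1, h2, h3, h4⟩ := hR _ _ huy ℓ u' hstep
  obtain ⟨vb, hv1, hv2⟩ := hR'.push h1 hyv
  rcases h2 with ⟨hl, he⟩ | h2
  · subst hl; subst he
    exact ⟨vb, vb, hv1, Or.inl ⟨rfl, rfl⟩, ⟨_, h3, hv2⟩, ⟨_, h4, hv2⟩⟩
  · obtain ⟨vh, v', hh1, hh2, hh3, hh4⟩ := hR' _ _ hv2 ℓ y' h2
    exact ⟨vh, v', hv1.trans hh1, hh2, ⟨yh, h3, hh3⟩, ⟨y', h4, hh4⟩⟩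

theorem BB.trans {u v w : S} (h1 : BB T tl u v) (h2 : BB T tl v w) : BB T tl u w := by
  obtain ⟨R, hR1, hR2, hR3⟩ := h1
  obtain ⟨R', hR1', hR2', hR3'⟩ := h2
  refine ⟨fun a b => ∃ y, R a y ∧ R' y b, hR1.comp hR1', ?_, ⟨v, hR3, hR3'⟩⟩
  exact SemiB.of_iff (fun a b => Iff.rfl) <|
    SemiB.of_iff (R' := fun a b => ∃ y, (flip R') a y ∧ (flip R) y b)
      (fun a b => ⟨fun ⟨y, hy1, hy2⟩ => ⟨y, hy2, hy1⟩, fun ⟨y, hy1, hy2⟩ => ⟨y, hy2, hy1⟩⟩)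
      (hR2'.comp hR2)

theorem BB.semiB : SemiB T tl (BB T tl) := by
  rintro u v ⟨R, hR1, hR2, hR3⟩ ℓ u' hstep
  obtain ⟨vh, v', h1, h2, h3, h4⟩ := hR1 _ _ hR3 ℓ u' hstep
  exact ⟨vh, v', h1, h2, ⟨R, hR1, hR2, h3⟩, ⟨R, hR1, hR2, h4⟩⟩

/-- Stuttering: intermediate states on a τ-path between BB-related states
are BB-related to the start. -/
theorem BB.stutter {v vh : S} (hbb : BB T tl v vh) (hpath : ReflTransGen (T tl) v vh) :
    ∀ {x : S}, ReflTransGen (T tl) v x → ReflTransGen (T tl) x vh → BB T tl v x := by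
  -- auxiliary relation
  set Q : S → S → Prop := fun a b =>
    BB T tl a b ∨ (b = v ∧ ReflTransGen (T tl) v a ∧ ReflTransGen (T tl) a vh)
      ∨ (a = v ∧ ReflTransGen (T tl) v b ∧ ReflTransGen (T tl) b vh) with hQ
  have hQsymm : ∀ a b, Q a b → Q b a := by
    rintro a b (h | ⟨rfl, h1, h2⟩ | ⟨rfl, h1, h2⟩)
    · exact Or.inl h.symm
    · exact Or.inr (Or.inr ⟨rfl, h1, h2⟩)
    · exact Or.inr (Or.inl ⟨rfl, h1, h2⟩)
  have hQsemi : SemiB T tl Q := by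
    rintro u w huw ℓ u' hstep
    rcases huw with h | ⟨rfl, h1, h2⟩ | ⟨rfl, h1, h2⟩
    · obtain ⟨vh', v', a1, a2, a3, a4⟩ := BB.semiB _ _ h ℓ u' hstep
      exact ⟨vh', v', a1, a2, Or.inl a3, Or.inl a4⟩
    · -- pair (u, v) with v ⇒ u ⇒ vh : respond from v by walking to u and mirroring
      exact ⟨u, u', h1, Or.inr hstep, Or.inl (BB.refl u), Or.inl (BB.refl u')⟩
    · -- pair (v, w) with v ⇒ w ⇒ vh : respond from w via vh using hbb
      obtain ⟨vh', v', a1, a2, a3, a4⟩ := BB.semiB _ _ hbb ℓ u' hstep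
      exact ⟨vh', v', h2.trans a1, a2, Or.inl a3, Or.inl a4⟩
  have hQflip : SemiB T tl (flip Q) :=
    SemiB.of_iff (fun a b => ⟨fun h => hQsymm b a h, fun h => hQsymm a b h⟩) hQsemi
  intro x hx1 hx2
  exact ⟨Q, hQsemi, hQflip, Or.inr (Or.inr ⟨rfl, hx1, hx2⟩)⟩

/-- An anchored τ-chain towards a BB-related state. -/
theorem BB.anchored_chain {v vh : S} (hbb : BB T tl v vh)
    (hpath : ReflTransGen (T tl) v vh) :
    ReflTransGen (fun a b => T tl a b ∧ BB T tl v b) v vh := by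
  have key : ∀ x, ReflTransGen (T tl) x vh → ReflTransGen (T tl) v x →
      ReflTransGen (fun a b => T tl a b ∧ BB T tl v b) x vh := by
    intro x hx
    induction hx using ReflTransGen.head_induction_on with
    | refl => intro _; exact ReflTransGen.refl
    | @head a c hac hcvh ih =>
      intro hva
      have hvc : ReflTransGen (T tl) v c := hva.trans (ReflTransGen.single hac)
      exact ReflTransGen.head ⟨hac, hbb.stutter hpath hvc hcvh⟩ (ih hvc)
  exact key v hpath ReflTransGen.refl

end SemiBr
namespace BPA

open Relation SemiBr

variable {C A : Type} (Γ : BPA C A)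

/-- The `R`-quotient LTS enriched with a death action `none` at `[]`. -/
def LT (R : Set C) : Option A → List C → List C → Prop := fun ℓ u v =>
  match ℓ with
  | some a => Γ.StepR R a u v
  | none => u = [] ∧ v = []

variable {Γ}

theorem req_nf {R : Set C} {α β : List C} (h : REq R α β) : nf R α = nf R β := by
  obtain ⟨ζ, a, b, rfl, rfl, ha, hb⟩ := h
  rw [nf_append R ζ a ha, nf_append R ζ b hb]

theorem r_nf {R : Set C} {r : List C → List C → Prop}
    (hREq : ∀ α β, REq R α β → r α β) (y : List C) : r y (nf R y) := by
  obtain ⟨s, hdec, hs⟩ := nf_decomp R y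
  exact hREq _ _ ⟨nf R y, s, [], hdec, (List.append_nil _).symm, hs, by simp⟩

theorem stepR12 {R₁ R₂ : Set C} (h12 : R₁ ⊆ R₂) {ℓ : A} {b c : List C}
    (h : Γ.StepR R₁ ℓ b c) : Γ.StepR R₂ ℓ (nf R₂ b) (nf R₂ c) := by
  obtain ⟨p, q, rfl, rfl, st⟩ := h
  exact ⟨p, q, nf_nf h12 p, nf_nf h12 q, st⟩

/-- Mapping an anchored `R₁`-chain into the `R₂`-quotient. -/
theorem chain_map {R₁ R₂ : Set C} (h12 : R₁ ⊆ R₂) {r : List C → List C → Prop}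
    (hREq : ∀ α β, REq R₁ α β → r α β) (htrans : ∀ {a b c}, r a b → r b c → r a c)
    {y β'' : List C}
    (hch : RelChain (Γ.StepR R₁ Γ.tau) r y (nf R₁ y) β'') :
    ReflTransGen (Γ.StepR R₂ Γ.tau) (nf R₂ y) (nf R₂ β'') ∧ r y β'' := by
  induction hch with
  | refl => exact ⟨by rw [nf_nf h12], r_nf hREq y⟩
  | @tail b c _ hbc ih =>
    exact ⟨ih.1.tail (stepR12 h12 hbc.1), hbc.2⟩

/-- The image of an `R₁`-bisimulation in the enriched `R₂`-quotient LTS is a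
semi-branching bisimulation. -/
theorem semiB_V {R₁ R₂ : Set C} (h12 : R₁ ⊆ R₂) (h2 : R₂ ⊆ Γ.GroundC)
    {r : List C → List C → Prop} (hr : Γ.IsRBisim R₁ r) :
    SemiB (Γ.LT R₂) (some Γ.tau)
      (fun u w => ∃ x y, r x y ∧ u = nf R₂ x ∧ w = nf R₂ y) := by
  obtain ⟨hEq, hREq, hcl⟩ := hr
  rintro u v ⟨x, y, hxy, hux, hvy⟩ ℓ u' hstep
  -- groundness transfer helper
  have ground_to_path : u = [] → ReflTransGen (Γ.LT R₂ (some Γ.tau)) v [] := by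
    intro hu
    obtain ⟨s, hxdec, hs⟩ := nf_decomp R₂ x
    have hxg : Γ.TauStar x [] := by
      rw [hxdec, ← hux, hu]
      exact Γ.ground_of_forall h2 s hs
    have hyg : Γ.TauStar y [] := (hcl x y hxy).1 hxg
    have := Γ.quotient_path (R := R₂) hyg
    rw [nf_nil] at this
    rw [hvy]
    exact ReflTransGen.mono (fun a b h => h) _ _ this
  match ℓ with
  | none =>
    obtain ⟨hu, hu'⟩ := hstep
    have hV : ∃ x' y', r x' y' ∧ ([] : List C) = nf R₂ x' ∧ ([] : List C) = nf R₂ y' :=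
      ⟨x, x, hEq.refl x, by rw [← hux, hu], by rw [← hux, hu]⟩
    refine ⟨[], [], ground_to_path hu, Or.inr ⟨rfl, rfl⟩, ?_, ?_⟩
    · rw [hu]; exact hV
    · rw [hu']; exact hV
  | some a =>
    obtain ⟨m, n, hmu, hnu', hmn⟩ := hstep
    by_cases hu : u = []
    · -- wild move from the `[]` class: descend and copy the representative
      refine ⟨[], u', ground_to_path hu, Or.inr ⟨m, n, by rw [← hmu, hu], hnu', hmn⟩,
        ?_, ⟨n, n, hEq.refl n, hnu', hnu'⟩⟩
      rw [hu]
      exact ⟨x, x, hEq.refl x, by rw [← hux, hu], by rw [← hux, hu]⟩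
    · -- mirror the representative's move on `x`
      have hne : nf R₂ m ≠ [] := by rw [← hmu]; exact hu
      have hxm : nf R₂ x = nf R₂ m := by rw [← hux, ← hmu]
      obtain ⟨x₂, hxstep, hx₂⟩ := Γ.mirror_step hmn hne hxm
      have hu'x₂ : u' = nf R₂ x₂ := by rw [hnu', hx₂]
      by_cases hta : a = Γ.tau
      · subst hta
        by_cases hstut : r x x₂
        · exact ⟨v, v, ReflTransGen.refl, Or.inl ⟨rfl, rfl⟩, ⟨x, y, hxy, hux, hvy⟩,
            ⟨x₂, y, hEq.trans (hEq.symm hstut) hxy, hu'x₂, hvy⟩⟩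
        · obtain ⟨β'', β', hchain, hpivot, _, hrel⟩ := (hcl x y hxy).2.1 x₂ hxstep hstut
          obtain ⟨hpath, hyβ⟩ := chain_map h12 hREq (fun hab hbc => hEq.trans hab hbc) hchain
          refine ⟨nf R₂ β'', nf R₂ β', ?_, Or.inr (stepR12 h12 hpivot),
            ⟨x, β'', hEq.trans hxy hyβ, hux, rfl⟩, ⟨x₂, β', hrel, hu'x₂, rfl⟩⟩
          rw [hvy]
          exact ReflTransGen.mono (fun a b h => h) _ _ hpath
      · obtain ⟨β'', β', hchain, hpivot, hrel⟩ := (hcl x y hxy).2.2 a hta x₂ hxstep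
        obtain ⟨hpath, hyβ⟩ := chain_map h12 hREq (fun hab hbc => hEq.trans hab hbc) hchain
        refine ⟨nf R₂ β'', nf R₂ β', ?_, Or.inr (stepR12 h12 hpivot),
          ⟨x, β'', hEq.trans hxy hyβ, hux, rfl⟩, ⟨x₂, β', hrel, hu'x₂, rfl⟩⟩
        rw [hvy]
        exact ReflTransGen.mono (fun a b h => h) _ _ hpath

/-- Normal forms are preserved along τ-paths of the enriched LTS. -/
theorem nf_form_path {R : Set C} {v vh : List C} (hv : nf R v = v)
    (hpath : ReflTransGen (Γ.LT R (some Γ.tau)) v vh) : nf R vh = vh := by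
  induction hpath with
  | refl => exact hv
  | tail _ hstep _ => exact StepR.nf_right Γ hstep

end BPA
namespace BPA

open Relation SemiBr

variable {C A : Type}

theorem lt_none_iff (Γ : BPA C A) (R : Set C) (u v : List C) :
    Γ.LT R none u v ↔ u = [] ∧ v = [] := Iff.rfl

theorem lt_some_iff (Γ : BPA C A) (R : Set C) (a : A) (u v : List C) :
    Γ.LT R (some a) u v ↔ Γ.StepR R a u v := Iff.rfl

theorem rbisim_mono_aux (Γ : BPA C A) {R₁ R₂ : Set C} (h12 : R₁ ⊆ R₂)
    (h2 : R₂ ⊆ Γ.GroundC) (α β : List C) (h : Γ.RBisim R₁ α β) :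
    Γ.RBisim R₂ α β := by
  obtain ⟨r, hr, hrab⟩ := h
  have hEq := hr.1
  set T := Γ.LT R₂ with hT
  set tl : Option A := some Γ.tau with htl
  set r₂ : List C → List C → Prop := fun x y => BB T tl (nf R₂ x) (nf R₂ y) with hr₂
  have hV : SemiB T tl (fun u w => ∃ x y, r x y ∧ u = nf R₂ x ∧ w = nf R₂ y) :=
    semiB_V h12 h2 hr
  have hVflip : SemiB T tl
      (flip (fun u w => ∃ x y, r x y ∧ u = nf R₂ x ∧ w = nf R₂ y)) := by
    refine SemiB.of_iff (R' := fun u w => ∃ x y, r x y ∧ u = nf R₂ x ∧ w = nf R₂ y)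
      ?_ hV
    intro u w
    constructor
    · rintro ⟨x, y, hxy, ha, hb⟩; exact ⟨y, x, hEq.symm hxy, hb, ha⟩
    · rintro ⟨x, y, hxy, ha, hb⟩; exact ⟨y, x, hEq.symm hxy, hb, ha⟩
  refine ⟨r₂, ⟨⟨fun x => BB.refl _, fun h => h.symm, fun h h' => h.trans h'⟩, ?_, ?_⟩,
    ⟨_, hV, hVflip, ⟨α, β, hrab, rfl, rfl⟩⟩⟩
  · intro a b hab
    show BB T tl (nf R₂ a) (nf R₂ b)
    rw [req_nf hab]
    exact BB.refl _
  · intro a b hab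
    have hbb : BB T tl (nf R₂ a) (nf R₂ b) := hab
    refine ⟨?_, ?_, ?_⟩
    · -- groundness
      intro hg
      have hpathq := Γ.quotient_path (R := R₂) hg
      rw [nf_nil] at hpathq
      have hpath : ReflTransGen (T tl) (nf R₂ a) [] :=
        ReflTransGen.mono (fun _ _ hh => hh) _ _ hpathq
      obtain ⟨vb, hvb1, hvb2⟩ := (BB.semiB (T := T) (tl := tl)).push hpath hbb
      obtain ⟨vh, v', hp1, hp2, -, -⟩ :=
        BB.semiB _ _ hvb2 none [] ((Γ.lt_none_iff R₂ [] []).mpr ⟨rfl, rfl⟩)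
      rcases hp2 with ⟨hcon, -⟩ | hp2
      · exact absurd hcon (by rw [htl]; simp)
      · obtain ⟨hvh, -⟩ := (Γ.lt_none_iff R₂ vh v').mp hp2
        have htot : ReflTransGen (T tl) (nf R₂ b) [] := by
          have := hvb1.trans hp1
          rwa [hvh] at this
        obtain ⟨s, hbdec, hs⟩ := nf_decomp R₂ b
        rw [hbdec]
        exact Γ.ground_of_quotient_path h2 (ReflTransGen.mono (fun _ _ hh => hh) _ _ htot) rfl s hs
    · -- τ moves
      intro a' hstep hna
      have hna' : ¬ BB T tl (nf R₂ a) (nf R₂ a') := hna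
      have hstepq : T tl (nf R₂ a) (nf R₂ a') := Γ.stepR_of_step hstep
      obtain ⟨vh, v', hpath, hdisj, hBBvh, hBBv'⟩ :=
        BB.semiB _ _ hbb tl (nf R₂ a') hstepq
      rcases hdisj with ⟨-, rfl⟩ | hp
      · exact absurd (hBBvh.trans hBBv'.symm) hna'
      · have hvvh : BB T tl (nf R₂ b) vh := hbb.symm.trans hBBvh
        have hanch := BB.anchored_chain hvvh hpath
        have hnfvh : nf R₂ vh = vh := Γ.nf_form_path (nf_idem R₂ b) hpath
        have hnfv' : nf R₂ v' = v' := StepR.nf_right Γ hp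
        refine ⟨vh, v', ?_, hp, ?_, ?_⟩
        · refine ReflTransGen.mono ?_ _ _ hanch
          rintro x y ⟨h1, h2⟩
          refine ⟨h1, ?_⟩
          show BB T tl (nf R₂ b) (nf R₂ y)
          rw [StepR.nf_right Γ h1]
          exact h2
        · intro hcon
          have hcon' : BB T tl vh v' := by
            have : BB T tl (nf R₂ vh) (nf R₂ v') := hcon
            rwa [hnfvh, hnfv'] at this
          exact hna' (hBBvh.trans (hcon'.trans hBBv'.symm))
        · show BB T tl (nf R₂ a') (nf R₂ v')
          rwa [hnfv']
    · -- visible moves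
      intro a0 ha0 a' hstep
      have hstepq : T (some a0) (nf R₂ a) (nf R₂ a') := Γ.stepR_of_step hstep
      obtain ⟨vh, v', hpath, hdisj, hBBvh, hBBv'⟩ :=
        BB.semiB _ _ hbb (some a0) (nf R₂ a') hstepq
      rcases hdisj with ⟨hcon, -⟩ | hp
      · rw [htl] at hcon
        exact absurd (Option.some.inj hcon) ha0
      · have hvvh : BB T tl (nf R₂ b) vh := hbb.symm.trans hBBvh
        have hanch := BB.anchored_chain hvvh hpath
        have hnfv' : nf R₂ v' = v' := StepR.nf_right Γ hp
        refine ⟨vh, v', ?_, hp, ?_⟩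
        · refine ReflTransGen.mono ?_ _ _ hanch
          rintro x y ⟨h1, h2⟩
          refine ⟨h1, ?_⟩
          show BB T tl (nf R₂ b) (nf R₂ y)
          rw [StepR.nf_right Γ h1]
          exact h2
        · show BB T tl (nf R₂ a') (nf R₂ v')
          rwa [hnfv']

end BPA

/-- Monotonicity of relative bisimilarity in the reference set. -/
theorem RBisim_monotone {C A : Type} (Γ : BPA C A) (hΓ : Γ.Normed)
    (R₁ R₂ : Set C) (h12 : R₁ ⊆ R₂) (h2 : R₂ ⊆ Γ.GroundC)
    (α β : List C) (h : Γ.RBisim R₁ α β) : Γ.RBisim R₂ α β := by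
  exact Γ.rbisim_mono_aux h12 h2 α β h
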